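/- Let G be a transitive subgroup of the symmetric group on a set Ω, and let G⁽²⁾ be its 2-closure: the set of permutations σ of Ω such that for all x, y ∈ Ω there exists g ∈ G with σ x = g x and σ y = g y. Then G⁽²⁾ is a transitive subgroup of the symmetric group on Ω containing G, and G has the OB property if and only if G⁽²⁾ has the OB property. -/

import Mathlib

/-- A relation on `Ω` is invariant under a group `G` of permutations of `Ω`. -/
def PermInvariant {Ω : Type*} (G : Subgroup (Equiv.Perm Ω)) (r : Ω → Ω → Prop) : Prop :=
  ∀ σ ∈ G, ∀ x y : Ω, r x y ↔ r (σ x) (σ y)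

/-- A permutation group `G` on `Ω` has the OB property if any two `G`-invariant
equivalence relations on `Ω` commute. -/
def PermOB {Ω : Type*} (G : Subgroup (Equiv.Perm Ω)) : Prop :=
  ∀ r s : Ω → Ω → Prop, Equivalence r → Equivalence s →
    PermInvariant G r → PermInvariant G s →
    ∀ x z : Ω, (∃ y, r x y ∧ s y z) ↔ (∃ y, s x y ∧ r y z)

/-- The 2-closure of a transitive permutation group `G` is a
transitive subgroup containing `G`, and `G` has the OB property iff its
2-closure does. -/
theorem two_closure_OB_iff {Ω : Type*} (G : Subgroup (Equiv.Perm Ω))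
    (htrans : ∀ x y : Ω, ∃ σ ∈ G, σ x = y) :
    ∃ H : Subgroup (Equiv.Perm Ω),
      (H : Set (Equiv.Perm Ω)) =
        {σ : Equiv.Perm Ω | ∀ x y : Ω, ∃ g ∈ G, σ x = g x ∧ σ y = g y} ∧
      G ≤ H ∧
      (∀ x y : Ω, ∃ σ ∈ H, σ x = y) ∧
      (PermOB G ↔ PermOB H) := by
  let H : Subgroup (Equiv.Perm Ω) :=
  { carrier := {σ : Equiv.Perm Ω | ∀ x y : Ω, ∃ g ∈ G, σ x = g x ∧ σ y = g y}
    mul_mem' := by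
      rintro σ τ hσ hτ x y
      obtain ⟨g, hg, hgx, hgy⟩ := hτ x y
      obtain ⟨h, hh, hhx, hhy⟩ := hσ (τ x) (τ y)
      exact ⟨h * g, mul_mem hh hg, by simp [← hgx, hhx],
        by simp [← hgy, hhy]⟩
    one_mem' := fun x y => ⟨1, one_mem G, by simp, by simp⟩
    inv_mem' := by
      rintro σ hσ x y
      obtain ⟨g, hg, hgx, hgy⟩ := hσ (σ⁻¹ x) (σ⁻¹ y)
      rw [show ∀ z, σ (σ⁻¹ z) = z from fun z => σ.apply_symm_apply z] at hgx hgy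
      refine ⟨g⁻¹, inv_mem hg, ?_, ?_⟩
      · simpa using congrArg (⇑g⁻¹) hgx.symm
      · simpa using congrArg (⇑g⁻¹) hgy.symm }
  have hGH : G ≤ H := fun g hg x y => ⟨g, hg, rfl, rfl⟩
  have key : ∀ r : Ω → Ω → Prop, PermInvariant G r ↔ PermInvariant H r := by
    intro r
    constructor
    · intro hr σ hσ x y
      obtain ⟨g, hg, hgx, hgy⟩ := hσ x y
      rw [hgx, hgy]
      exact hr g hg x y
    · intro hr g hg x y
      exact hr g (hGH hg) x y
  refine ⟨H, rfl, hGH, ?_, ?_⟩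
  · intro x y
    obtain ⟨σ, hσ, h⟩ := htrans x y
    exact ⟨σ, hGH hσ, h⟩
  · constructor
    · intro hOB r s hr hs hir his
      exact hOB r s hr hs ((key r).mpr hir) ((key s).mpr his)
    · intro hOB r s hr hs hir his
      exact hOB r s hr hs ((key r).mp hir) ((key s).mp his)
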